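/- Under the hypotheses that E is T-universally complete with weak order unit e = Te, T strictly positive, and S a conditional expectation with TS = T = ST, for every f ∈ L²(T) one has (Sf)² ≤ S(f²). -/

import Mathlib

open Finset

/-- The universal completion `E^u` of a Dedekind complete Riesz space with weak
order unit `e`, carrying its canonical `f`-algebra structure with `e = 1` the
multiplicative unit and weak order unit. The Riesz space `E` itself is modeled
as a Riesz subspace of `A`. -/
class FRieszSpace (A : Type*) extends CommRing A, Lattice A, Module ℝ A where
  add_le_add_left' : ∀ a b : A, a ≤ b → ∀ c : A, c + a ≤ c + b
  mul_nonneg' : ∀ a b : A, 0 ≤ a → 0 ≤ b → 0 ≤ a * b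
  smul_nonneg' : ∀ (r : ℝ) (a : A), 0 ≤ r → 0 ≤ a → 0 ≤ r • a
  inf_mul_orth : ∀ a b c : A, 0 ≤ c → a ⊓ b = 0 → (a * c) ⊓ b = 0
  one_weak_unit : ∀ a : A, (a ⊔ -a) ⊓ 1 = 0 → a = 0

variable {A : Type*} [FRieszSpace A]

/-- `E` is Dedekind complete: every nonempty subset of `E` bounded above in `E`
has a supremum in `E`. -/
def DedekindCompleteIn (E : Set A) : Prop :=
  ∀ S : Set A, S ⊆ E → S.Nonempty → (∃ b ∈ E, ∀ x ∈ S, x ≤ b) → ∃ a ∈ E, IsLUB S a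

/-- A Riesz subspace of `A` containing the weak order unit `1`. -/
structure IsRieszSubspace (E : Set A) : Prop where
  zero_mem : (0:A) ∈ E
  add_mem : ∀ x y : A, x ∈ E → y ∈ E → x + y ∈ E
  smul_mem : ∀ (r : ℝ) (x : A), x ∈ E → r • x ∈ E
  abs_mem : ∀ x : A, x ∈ E → (x ⊔ -x) ∈ E
  one_mem : (1:A) ∈ E

/-- A conditional expectation operator on `E`: a positive order continuous
linear projection fixing the weak order unit, with range a Riesz subspace. -/
structure IsCondExpOn (E : Set A) (T : A →ₗ[ℝ] A) : Prop where
  mapsTo : ∀ x ∈ E, T x ∈ E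
  positive : ∀ x : A, 0 ≤ x → 0 ≤ T x
  projection : ∀ x : A, T (T x) = T x
  unit : T 1 = 1
  range_abs : ∀ x : A, ∃ y : A, T y = (T x) ⊔ (-(T x))
  orderCont : ∀ (S : Set A) (a : A), S.Nonempty → DirectedOn (· ≤ ·) S → IsLUB S a →
      IsLUB (T '' S) (T a)

def StrictlyPositive (T : A →ₗ[ℝ] A) : Prop := ∀ x : A, 0 < x → 0 < T x

/-- `E` is `T`-universally complete: every upward directed set in `E₊` whose
image under `T` is order bounded in `A = E^u` has a supremum in `E`. -/
def TUniversallyComplete (E : Set A) (T : A →ₗ[ℝ] A) : Prop :=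
  ∀ S : Set A, S ⊆ E → S.Nonempty → DirectedOn (· ≤ ·) S → (∀ x ∈ S, 0 ≤ x) →
    BddAbove (T '' S) → ∃ a ∈ E, IsLUB S a

/-- `L²(T) = {x ∈ E : x² ∈ E}` (squares taken in the `f`-algebra `A = E^u`). -/
def L2 (E : Set A) : Set A := {x | x ∈ E ∧ x * x ∈ E}

/-- A band projection: an order projection `0 ≤ P ≤ I`, `P² = P`. -/
def IsBandProjection (P : A →ₗ[ℝ] A) : Prop :=
  (∀ x, P (P x) = P x) ∧ ∀ x : A, 0 ≤ x → 0 ≤ P x ∧ P x ≤ x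

/-- `P` is the band projection onto the band generated by `u ≥ 0`:
`P x = sup_n (x ⊓ n u)` for `x ≥ 0`. -/
def IsBandProjOnto (P : A →ₗ[ℝ] A) (u : A) : Prop :=
  IsBandProjection P ∧ ∀ x : A, 0 ≤ x → IsLUB {y | ∃ n : ℕ, y = x ⊓ (n • u)} (P x)

/-- The variance `var(x) = T (x - Tx)²`. -/
def variance (T : A →ₗ[ℝ] A) (x : A) : A := T ((x - T x) * (x - T x))

/-- `f` and `g` are `T`-conditionally independent: there are conditional
expectation operators `Tf`, `Tg` commuting with `T`, with `f`, resp. `g`, in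
their ranges, satisfying `Tf ∘ Tg = T = Tg ∘ Tf`. -/
def AreTCondIndep (E : Set A) (T : A →ₗ[ℝ] A) (f g : A) : Prop :=
  ∃ Tf Tg : A →ₗ[ℝ] A, IsCondExpOn E Tf ∧ IsCondExpOn E Tg ∧
    Tf f = f ∧ Tg g = g ∧
    T.comp Tf = T ∧ Tf.comp T = T ∧ T.comp Tg = T ∧ Tg.comp T = T ∧
    Tf.comp Tg = T ∧ Tg.comp Tf = T

/-- A family of band projections is `T`-conditionally independent: `T`
factorizes over products of the components `P i e` and `(I - P i) e`. -/
def IsTCondIndepProjFamily {ι : Type*} (T : A →ₗ[ℝ] A) (P : ι → A →ₗ[ℝ] A) : Prop :=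
  ∀ (s : Finset ι) (c : ι → Bool),
    T (∏ i ∈ s, (if c i then P i 1 else 1 - P i 1)) =
      ∏ i ∈ s, T (if c i then P i 1 else 1 - P i 1)

/-- `e`-uniform convergence of a sequence. -/
def EUnifTendsTo (x : ℕ → A) (l : A) : Prop :=
  ∀ ε : ℝ, 0 < ε → ∃ N : ℕ, ∀ n ≥ N, |x n - l| ≤ ε • (1:A)

/-- Order convergence of a sequence. -/
def OrderConvergesTo (x : ℕ → A) (l : A) : Prop :=
  ∃ d : ℕ → A, Antitone d ∧ IsGLB (Set.range d) 0 ∧ ∀ n, |x n - l| ≤ d n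

/-- `h = e^{-g}` via the functional calculus on `E^e`: for every sequence of
polynomials converging uniformly to `t ↦ exp (-t)` on `[-1,1]`, the
evaluations at `g` converge `e`-uniformly to `h`. -/
def IsExpNeg (g h : A) : Prop :=
  ∀ (d : ℕ → ℕ) (a : ℕ → ℕ → ℝ),
    (∀ ε : ℝ, 0 < ε → ∃ N : ℕ, ∀ k ≥ N, ∀ t ∈ Set.Icc (-1:ℝ) 1,
        |(∑ i ∈ Finset.range (d k), a k i * t ^ i) - Real.exp (-t)| ≤ ε) →
    EUnifTendsTo (fun k => ∑ i ∈ Finset.range (d k), a k i • g ^ i) h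



namespace FRaux

instance : AddLeftMono A := ⟨fun c a b h => FRieszSpace.add_le_add_left' a b h c⟩
instance : AddRightMono A :=
  ⟨fun c a b h => by
    have := FRieszSpace.add_le_add_left' a b h c
    simpa [add_comm] using this⟩

attribute [local instance] AddCommGroup.toDistribLattice

theorem smul_mono {a b : A} (h : a ≤ b) {r : ℝ} (hr : 0 ≤ r) : r • a ≤ r • b := by
  have := FRieszSpace.smul_nonneg' r (b - a) hr (by simpa using h)
  rw [smul_sub] at this
  have := sub_nonneg.mp this
  exact this

theorem smul_mono_scalar {r r' : ℝ} (h : r ≤ r') {z : A} (hz : 0 ≤ z) : r • z ≤ r' • z := by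
  have := FRieszSpace.smul_nonneg' (r' - r) z (by linarith) hz
  rw [sub_smul] at this
  exact sub_nonneg.mp this

theorem abs_nonneg' (a : A) : 0 ≤ |a| := by
  rw [← posPart_add_negPart a]
  exact add_nonneg (posPart_nonneg a) (negPart_nonneg a)

/-- disjoint elements multiply to zero -/
theorem mul_of_disjoint {a b : A} (h : a ⊓ b = 0) : a * b = 0 := by
  have ha : 0 ≤ a := h ▸ inf_le_left
  have hb : 0 ≤ b := h ▸ inf_le_right
  have h1 : (a * b) ⊓ b = 0 := FRieszSpace.inf_mul_orth a b b hb h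
  have h2 : (b * a) ⊓ (a * b) = 0 := by
    refine FRieszSpace.inf_mul_orth b (a * b) a ha ?_
    rw [inf_comm]; exact h1
  rw [mul_comm b a, inf_idem] at h2
  exact h2

theorem posPart_mul_negPart (a : A) : a⁺ * a⁻ = 0 :=
  mul_of_disjoint (posPart_inf_negPart_eq_zero a)

theorem sq_eq_pos_neg (a : A) : a * a = a⁺ * a⁺ + a⁻ * a⁻ := by
  have h := posPart_sub_negPart a
  have h0 := posPart_mul_negPart a
  calc a * a = (a⁺ - a⁻) * (a⁺ - a⁻) := by rw [h]
    _ = a⁺ * a⁺ + a⁻ * a⁻ - 2 * (a⁺ * a⁻) := by ring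
    _ = a⁺ * a⁺ + a⁻ * a⁻ := by rw [h0]; ring

theorem sq_nonneg' (a : A) : 0 ≤ a * a := by
  rw [sq_eq_pos_neg]
  exact add_nonneg (FRieszSpace.mul_nonneg' _ _ (posPart_nonneg a) (posPart_nonneg a))
    (FRieszSpace.mul_nonneg' _ _ (negPart_nonneg a) (negPart_nonneg a))

theorem abs_sq (a : A) : |a| * |a| = a * a := by
  have h := posPart_add_negPart a
  have h0 := posPart_mul_negPart a
  rw [sq_eq_pos_neg a]
  calc |a| * |a| = (a⁺ + a⁻) * (a⁺ + a⁻) := by rw [h]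
    _ = a⁺ * a⁺ + a⁻ * a⁻ + 2 * (a⁺ * a⁻) := by ring
    _ = a⁺ * a⁺ + a⁻ * a⁻ := by rw [h0]; ring

theorem one_nonneg : (0 : A) ≤ 1 := by simpa using sq_nonneg' (1 : A)

theorem mul_mono {a a' b b' : A} (ha : 0 ≤ a) (hb : 0 ≤ b) (h1 : a ≤ a') (h2 : b ≤ b') :
    a * b ≤ a' * b' := by
  have k1 : 0 ≤ a' * (b' - b) :=
    FRieszSpace.mul_nonneg' _ _ (le_trans ha h1) (by simpa using h2)
  have k2 : 0 ≤ (a' - a) * b := FRieszSpace.mul_nonneg' _ _ (by simpa using h1) hb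
  have : 0 ≤ a' * b' - a * b := by
    have := add_nonneg k1 k2
    calc (0:A) ≤ a' * (b' - b) + (a' - a) * b := this
      _ = a' * b' - a * b := by ring
  exact sub_nonneg.mp this

/-- superadditivity of inf over sums of nonnegatives -/
theorem inf_add_le {a b c : A} (ha : 0 ≤ a) (hb : 0 ≤ b) (hc : 0 ≤ c) :
    a ⊓ (b + c) ≤ a ⊓ b + a ⊓ c := by
  have h1 : a ⊓ (b + c) - a ⊓ b ≤ a ⊓ c := by
    have e : a ⊓ (b + c) - a ⊓ b = (a ⊓ (b + c) - a) ⊔ (a ⊓ (b + c) - b) := by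
      rw [sub_inf]
    have b1 : a ⊓ (b + c) - a ≤ c :=
      sub_le_iff_le_add.mpr (by
        have : a ⊓ (b+c) ≤ a := inf_le_left
        exact le_trans this (le_add_of_nonneg_left hc))
    have b2 : a ⊓ (b + c) - b ≤ c := sub_le_iff_le_add.mpr (by
      have : a ⊓ (b+c) ≤ b + c := inf_le_right
      simpa [add_comm] using this)
    have b3 : a ⊓ (b + c) - a ⊓ b ≤ a := by
      have : a ⊓ (b + c) - a ⊓ b ≤ a ⊓ (b + c) :=
        sub_le_self _ (le_inf ha hb)
      exact le_trans this inf_le_left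
    have : a ⊓ (b + c) - a ⊓ b ≤ c := by rw [e]; exact sup_le b1 b2
    exact le_inf b3 this
  have := add_le_add_right h1 (a ⊓ b)
  simpa [sub_add_cancel, add_comm] using this

theorem sup_le_add {a b : A} (ha : 0 ≤ a) (hb : 0 ≤ b) : a ⊔ b ≤ a + b :=
  sup_le (le_add_of_nonneg_right hb) (le_add_of_nonneg_left ha)

theorem nsmul_nonneg' {a : A} (ha : 0 ≤ a) (k : ℕ) : 0 ≤ k • a := by
  induction k with
  | zero => simp
  | succ k ih => rw [succ_nsmul]; exact add_nonneg ih ha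

theorem inf_nsmul_eq_zero {y R : A} (hy : 0 ≤ y) (hR : 0 ≤ R) (h : y ⊓ R = 0) (k : ℕ) :
    y ⊓ (k • R) = 0 := by
  induction k with
  | zero => simpa using hy
  | succ k ih =>
    have hk : 0 ≤ (k • R : A) := nsmul_nonneg' hR k
    have : y ⊓ ((k+1) • R) ≤ y ⊓ (k • R) + y ⊓ R := by
      rw [succ_nsmul]; exact inf_add_le hy hk hR
    rw [ih, h, add_zero] at this
    exact le_antisymm this (le_inf hy (by rw [succ_nsmul]; exact add_nonneg hk hR))

theorem nsmul_mono {a b : A} (h : a ≤ b) (k : ℕ) : k • a ≤ k • b := by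
  induction k with
  | zero => simp
  | succ k ih => rw [succ_nsmul, succ_nsmul]; exact add_le_add ih h

theorem posPart_inf_nsmul_negPart (a : A) (k : ℕ) : a⁺ ⊓ (k • a⁻) = 0 :=
  inf_nsmul_eq_zero (posPart_nonneg a) (negPart_nonneg a) (posPart_inf_negPart_eq_zero a) k

theorem sub_inf_eq_posPart (a b : A) : a - a ⊓ b = (a - b)⁺ := by
  rw [sub_inf, sub_self, posPart_def, sup_comm]

theorem posPart_sup (a b : A) : (a ⊔ b)⁺ = a⁺ ⊔ b⁺ := by
  rw [posPart_def, posPart_def, posPart_def, sup_sup_distrib_right]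





theorem rat_smul_mul (q : ℚ) (a b : A) : ((q:ℝ) • a) * b = (q:ℝ) • (a * b) := by
  have hd : (q.den : ℝ) ≠ 0 := by
    exact_mod_cast (Nat.cast_ne_zero (R := ℝ)).mpr q.den_nz
  have hcast : (q.den : ℝ) * (q : ℝ) = (q.num : ℝ) := by
    rw [Rat.cast_def]
    field_simp
  have key : ∀ z : A, (q.den : ℝ) • ((q:ℝ) • z) = (q.num : ℝ) • z := by
    intro z; rw [smul_smul, hcast]
  have int_mul : ∀ z w : A, ((q.num : ℝ) • z) * w = (q.num : ℝ) • (z * w) := by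
    intro z w
    rw [Int.cast_smul_eq_zsmul ℝ q.num z, Int.cast_smul_eq_zsmul ℝ q.num (z*w)]
    exact smul_mul_assoc q.num z w
  have h1 : (q.den : ℝ) • (((q:ℝ) • a) * b) = (q.num : ℝ) • (a * b) := by
    rw [Nat.cast_smul_eq_nsmul ℝ q.den (((q:ℝ) • a) * b), ← smul_mul_assoc q.den ((q:ℝ)•a) b,
      ← Nat.cast_smul_eq_nsmul ℝ q.den ((q:ℝ)•a), key, int_mul]
  have h2 : (q.den : ℝ) • ((q:ℝ) • (a * b)) = (q.num : ℝ) • (a * b) := key _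
  have := h1.trans h2.symm
  exact smul_right_injective A hd this

theorem rat_smul_one_mul (q : ℚ) (b : A) : ((q:ℝ) • (1:A)) * b = (q:ℝ) • b := by
  rw [rat_smul_mul, one_mul]

theorem rat_smul_one_sq (q q' : ℚ) :
    (((q:ℝ)) • (1:A)) * ((q':ℝ) • (1:A)) = (((q*q' : ℚ)):ℝ) • (1:A) := by
  rw [rat_smul_mul, one_mul, smul_smul, Rat.cast_mul]

theorem nat_smul_eq (n : ℕ) (a : A) : n • a = ((n:ℚ):ℝ) • a := by
  rw [Rat.cast_natCast, Nat.cast_smul_eq_nsmul]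

section Eclosure

variable {E : Set A} (hE : IsRieszSubspace E)
include hE

theorem mem_abs {x : A} (hx : x ∈ E) : |x| ∈ E := hE.abs_mem x hx

theorem mem_neg {x : A} (hx : x ∈ E) : -x ∈ E := by
  have := hE.smul_mem (-1 : ℝ) x hx
  simpa using this

theorem mem_sub {x y : A} (hx : x ∈ E) (hy : y ∈ E) : x - y ∈ E := by
  have := hE.add_mem x (-y) hx (mem_neg hE hy)
  simpa [sub_eq_add_neg] using this

theorem mem_posPart {x : A} (hx : x ∈ E) : x⁺ ∈ E := by
  have h2 : x⁺ = ((1:ℝ)/2) • (x + |x|) := by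
    have e1 : x⁺ + x⁺ = x + |x| := by
      have a1 := posPart_sub_negPart x
      have a2 := posPart_add_negPart x
      have : x + |x| = (x⁺ - x⁻) + (x⁺ + x⁻) := by rw [a1, a2]
      rw [this]; ring
    have : ((1:ℝ)/2) • (x + |x|) = ((1:ℝ)/2) • (x⁺ + x⁺) := by rw [e1]
    rw [this]
    have : x⁺ + x⁺ = (2:ℝ) • x⁺ := by
      rw [show ((2:ℝ)) = (1:ℝ)+1 by norm_num, add_smul, one_smul]
    rw [this, smul_smul]
    norm_num
  rw [h2]
  exact hE.smul_mem _ _ (hE.add_mem _ _ hx (mem_abs hE hx))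

theorem mem_sup {x y : A} (hx : x ∈ E) (hy : y ∈ E) : x ⊔ y ∈ E := by
  have e : x ⊔ y = x + (y - x)⁺ := by
    rw [posPart_def, add_sup, add_sub_cancel, add_zero, sup_comm]
  rw [e]
  exact hE.add_mem _ _ hx (mem_posPart hE (mem_sub hE hy hx))

theorem mem_inf {x y : A} (hx : x ∈ E) (hy : y ∈ E) : x ⊓ y ∈ E := by
  have e : x ⊓ y = x - (x - y)⁺ := by
    rw [posPart_def, sub_sup, sub_sub_cancel, sub_zero, inf_comm]
  rw [e]
  exact mem_sub hE hx (mem_posPart hE (mem_sub hE hx hy))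

theorem mem_nsmul {x : A} (hx : x ∈ E) (n : ℕ) : n • x ∈ E := by
  rw [← Nat.cast_smul_eq_nsmul ℝ n x]
  exact hE.smul_mem _ _ hx

end Eclosure

section Arch

variable {E : Set A} {T : A →ₗ[ℝ] A}

theorem Tmono (hT : IsCondExpOn E T) {a b : A} (h : a ≤ b) : T a ≤ T b := by
  have := hT.positive (b - a) (by simpa using h)
  rw [map_sub] at this
  exact sub_nonneg.mp this

theorem arch_E (hTU : TUniversallyComplete E T) (hT : IsCondExpOn E T)
    (hE : IsRieszSubspace E) {x y : A} (hxE : x ∈ E) (hx : 0 ≤ x)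
    (hb : ∀ k : ℕ, k • x ≤ y) : x = 0 := by
  obtain ⟨a, -, hlub⟩ := hTU (Set.range (fun n : ℕ => n • x))
    (by rintro - ⟨n, rfl⟩; exact mem_nsmul hE hxE n)
    ⟨0, ⟨0, by simp⟩⟩
    (by
      rintro - ⟨n, rfl⟩ - ⟨k, rfl⟩
      refine ⟨(n + k) • x, ⟨n + k, rfl⟩, ?_, ?_⟩
      · rw [add_nsmul]; exact le_add_of_nonneg_right (nsmul_nonneg' hx k)
      · rw [add_nsmul]; exact le_add_of_nonneg_left (nsmul_nonneg' hx n))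
    (by rintro - ⟨n, rfl⟩; exact nsmul_nonneg' hx n)
    ⟨T y, by rintro - ⟨-, ⟨n, rfl⟩, rfl⟩; exact Tmono hT (hb n)⟩
  have hub : a - x ∈ upperBounds (Set.range (fun n : ℕ => n • x)) := by
    rintro - ⟨n, rfl⟩
    have : (n+1) • x ≤ a := hlub.1 ⟨n+1, rfl⟩
    rw [succ_nsmul] at this
    exact le_sub_iff_add_le.mpr this
  have := hlub.2 hub
  have hx0 : x ≤ 0 := by
    have := sub_nonneg.mpr this
    simpa using this
  exact le_antisymm hx0 hx

theorem arch_A (hTU : TUniversallyComplete E T) (hT : IsCondExpOn E T)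
    (hE : IsRieszSubspace E) {z y₀ : A} (hy : y₀ ∈ E) (hz : 0 ≤ z)
    (hb : ∀ k : ℕ, k • z ≤ y₀) : z = 0 := by
  have hzy : z ≤ y₀ := by have := hb 1; simpa using this
  have hy0 : 0 ≤ y₀ := le_trans hz hzy
  have hfrac : ∀ k : ℕ, 0 < k → z ≤ ((1:ℝ)/k) • y₀ := by
    intro k hk
    have h1 := smul_mono (hb k) (by positivity : (0:ℝ) ≤ 1/k)
    have hkne : ((k:ℝ)) ≠ 0 := (Nat.cast_pos.mpr hk).ne'
    have h2 : ((1:ℝ)/k) • (k • z) = z := by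
      rw [← Nat.cast_smul_eq_nsmul ℝ k z, smul_smul, one_div, inv_mul_cancel₀ hkne, one_smul]
    rwa [h2] at h1
  set D : Set A := {s | s ∈ E ∧ 0 ≤ s ∧ s + z ≤ y₀} with hD
  obtain ⟨a, haE, hlub⟩ := hTU D (fun s hs => hs.1)
    ⟨0, hE.zero_mem, le_refl 0, by simpa using hzy⟩
    (by
      rintro s ⟨hs1, hs2, hs3⟩ t ⟨ht1, ht2, ht3⟩
      refine ⟨s ⊔ t, ⟨mem_sup hE hs1 ht1, le_trans hs2 le_sup_left, ?_⟩, le_sup_left, le_sup_right⟩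
      rw [sup_add]
      exact sup_le hs3 ht3)
    (fun s hs => hs.2.1)
    ⟨T y₀, by
      rintro - ⟨s, ⟨-, -, hs3⟩, rfl⟩
      exact Tmono hT (le_trans (le_add_of_nonneg_right hz) hs3)⟩
  have haub : a ≤ y₀ - z := hlub.2 (fun s hs => le_sub_iff_add_le.mpr hs.2.2)
  have hka : ∀ k : ℕ, 0 < k → (1 - (1:ℝ)/k) • y₀ ≤ a := by
    intro k hk
    refine hlub.1 ⟨hE.smul_mem _ _ hy, ?_, ?_⟩
    · exact FRieszSpace.smul_nonneg' _ _ (by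
        have : (1:ℝ)/k ≤ 1 := by
          rw [div_le_one (by exact_mod_cast hk)]
          exact_mod_cast hk
        linarith) hy0
    · calc (1 - (1:ℝ)/k) • y₀ + z ≤ (1 - (1:ℝ)/k) • y₀ + ((1:ℝ)/k) • y₀ :=
          add_le_add_right (hfrac k hk) _
        _ = y₀ := by rw [← add_smul]; norm_num
  have hya_mem : y₀ - a ∈ E := mem_sub hE hy haE
  have hya_nonneg : 0 ≤ y₀ - a :=
    sub_nonneg.mpr (le_trans haub (sub_le_self _ hz))
  have hya_small : ∀ k : ℕ, k • (y₀ - a) ≤ y₀ := by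
    intro k
    cases k with
    | zero => simpa using hy0
    | succ k =>
      have hk1 : ((k:ℝ)+1) ≠ 0 := by positivity
      have h1 := hka (k+1) (Nat.succ_pos k)
      rw [show (((k+1:ℕ)):ℝ) = ((k:ℝ)+1) by push_cast; ring] at h1
      have h2 : y₀ - a ≤ ((1:ℝ)/(k+1)) • y₀ := by
        have h3 : y₀ - a ≤ y₀ - (1 - (1:ℝ)/(k+1)) • y₀ := sub_le_sub_left h1 y₀
        calc y₀ - a ≤ y₀ - (1 - (1:ℝ)/(k+1)) • y₀ := h3
          _ = ((1:ℝ)/(k+1)) • y₀ := by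
              rw [sub_smul, one_smul]
              push_cast
              abel
      calc (k+1) • (y₀ - a) ≤ (k+1) • (((1:ℝ)/(k+1)) • y₀) := nsmul_mono h2 (k+1)
        _ = y₀ := by
            rw [← Nat.cast_smul_eq_nsmul ℝ (k+1), smul_smul]
            push_cast
            rw [mul_one_div, div_self hk1, one_smul]
  have harch : y₀ - a = 0 := arch_E hTU hT hE hya_mem hya_nonneg hya_small
  have hay : y₀ = a := sub_eq_zero.mp harch
  have hle : y₀ ≤ y₀ - z := hay ▸ haub
  have hz0 : z ≤ 0 := by
    have h := sub_nonneg.mpr hle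
    have : y₀ - z - y₀ = -z := by ring
    rw [this] at h
    simpa using h
  exact le_antisymm hz0 hz

end Arch


section Components

variable {E : Set A} {T : A →ₗ[ℝ] A}

theorem comp_exists (hTU : TUniversallyComplete E T) (hT : IsCondExpOn E T)
    (hE : IsRieszSubspace E) {u : A} (huE : u ∈ E) (hu : 0 ≤ u) :
    ∃ p : A, p ∈ E ∧ 0 ≤ p ∧ p ≤ 1 ∧ p * p = p ∧ (1 - p) ⊓ u = 0 ∧
      (∀ w : A, 0 ≤ w → w ⊓ u = 0 → w ⊓ p = 0) := by
  set c : ℕ → A := fun n => 1 ⊓ (n • u) with hc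
  have hc0 : c 0 = 0 := by simp [hc, inf_eq_right.mpr one_nonneg]
  have hcmem : ∀ n, c n ∈ E := fun n => mem_inf hE hE.one_mem (mem_nsmul hE huE n)
  have hcnn : ∀ n, 0 ≤ c n := fun n => le_inf one_nonneg (nsmul_nonneg' hu n)
  have hcmono : ∀ n k : ℕ, n ≤ k → c n ≤ c k := by
    intro n k hnk
    exact inf_le_inf_left 1 (by
      have hsplit : (k - n) • u + n • u = k • u := by
        rw [← add_nsmul, Nat.sub_add_cancel hnk]
      have h0 : 0 ≤ k • u - n • u := by
        rw [← hsplit, add_sub_cancel_right]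
        exact nsmul_nonneg' hu (k - n)
      exact sub_nonneg.mp h0)
  have hcle1 : ∀ n, c n ≤ 1 := fun n => inf_le_left
  obtain ⟨p, hpE, hlub⟩ := hTU (Set.range c)
    (by rintro - ⟨n, rfl⟩; exact hcmem n)
    ⟨c 0, ⟨0, rfl⟩⟩
    (by
      rintro - ⟨n, rfl⟩ - ⟨k, rfl⟩
      exact ⟨c (max n k), ⟨max n k, rfl⟩, hcmono _ _ (le_max_left n k),
        hcmono _ _ (le_max_right n k)⟩)
    (by rintro - ⟨n, rfl⟩; exact hcnn n)
    ⟨T 1, by rintro - ⟨-, ⟨n, rfl⟩, rfl⟩; exact Tmono hT (hcle1 n)⟩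
  have hcp : ∀ n, c n ≤ p := fun n => hlub.1 ⟨n, rfl⟩
  have hp0 : 0 ≤ p := hc0 ▸ hcp 0
  have hp1 : p ≤ 1 := hlub.2 (by rintro - ⟨n, rfl⟩; exact hcle1 n)
  -- (c): (1 - p) ⊓ u = 0
  have hd : (1 - p) ⊓ u = 0 := by
    set d : A := (1 - p) ⊓ u with hdd
    have hd0 : 0 ≤ d := le_inf (sub_nonneg.mpr hp1) hu
    have hdE : d ∈ E := mem_inf hE (mem_sub hE hE.one_mem hpE) huE
    have hstep : ∀ n, c n + d ≤ c (n + 1) := by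
      intro n
      have b1 : c n + d ≤ 1 := by
        have : c n + d ≤ c n + (1 - p) := add_le_add_right inf_le_left _
        calc c n + d ≤ c n + (1 - p) := this
          _ ≤ p + (1 - p) := add_le_add_left (hcp n) _
          _ = 1 := by ring
      have b2 : c n + d ≤ (n+1) • u := by
        have : c n + d ≤ n • u + u := add_le_add inf_le_right inf_le_right
        rwa [← succ_nsmul] at this
      exact le_inf b1 b2
    have hkd : ∀ k : ℕ, k • d ≤ c k := by
      intro k
      induction k with
      | zero => simp [hc0]
      | succ k ih =>
        calc (k+1) • d = k • d + d := succ_nsmul d k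
          _ ≤ c k + d := add_le_add_left ih _
          _ ≤ c (k+1) := hstep k
    have : d = 0 := arch_E hTU hT hE hdE hd0 (fun k => le_trans (hkd k) (hcle1 k))
    exact this
  -- (d): disjointness transfer
  have htrans : ∀ w : A, 0 ≤ w → w ⊓ u = 0 → w ⊓ p = 0 := by
    intro w hw hwu
    have hwnu : ∀ n : ℕ, w ⊓ (n • u) = 0 := inf_nsmul_eq_zero hw hu hwu
    have hwc : ∀ n, w ⊓ c n = 0 := by
      intro n
      refine le_antisymm ?_ (le_inf hw (hcnn n))
      calc w ⊓ c n ≤ w ⊓ (n • u) := inf_le_inf_left w inf_le_right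
        _ = 0 := hwnu n
    have hkey : ∀ n, c n ≤ p - p ⊓ w := by
      intro n
      have e1 : c n + p ⊓ w = (c n + p) ⊓ (c n + w) := by rw [add_inf]
      have e2 : c n + w = c n ⊔ w := by
        have := inf_add_sup (c n) w
        rw [inf_comm, hwc n] at this
        rw [← this, zero_add]
      have e3 : c n ⊔ w ≤ p ⊔ w := sup_le_sup_right (hcp n) w
      have e4 : p ⊔ w = p + (w - p)⁺ := by
        rw [posPart_def, add_sup, add_sub_cancel, add_zero, sup_comm]
      have e5 : (c n + p) ⊓ (p + (w - p)⁺) = p + ((c n) ⊓ (w - p)⁺) := by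
        rw [add_inf, add_comm p (c n)]
      have e6 : (c n) ⊓ (w - p)⁺ ≤ 0 := by
        have h7 : (w - p)⁺ ≤ w := sup_le (sub_le_self w hp0) hw
        calc (c n) ⊓ (w - p)⁺ ≤ (c n) ⊓ w := inf_le_inf_left _ h7
          _ = 0 := by rw [inf_comm]; exact hwc n
      have : c n + p ⊓ w ≤ p := by
        calc c n + p ⊓ w = (c n + p) ⊓ (c n + w) := e1
          _ = (c n + p) ⊓ (c n ⊔ w) := by rw [e2]
          _ ≤ (c n + p) ⊓ (p ⊔ w) := inf_le_inf_left _ e3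
          _ = (c n + p) ⊓ (p + (w - p)⁺) := by rw [e4]
          _ = p + ((c n) ⊓ (w - p)⁺) := e5
          _ ≤ p + 0 := add_le_add_right e6 _
          _ = p := add_zero p
      exact le_sub_iff_add_le.mpr this
    have : p ≤ p - p ⊓ w := hlub.2 (by rintro - ⟨n, rfl⟩; exact hkey n)
    have h8 : p ⊓ w ≤ 0 := by
      have := sub_nonneg.mpr this
      have e : p - (p - p ⊓ w) = p ⊓ w := by ring
      rw [← e]
      simpa using this
    rw [inf_comm]
    exact le_antisymm h8 (le_inf hp0 hw)
  -- (e): idempotent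
  have hidem : p * p = p := by
    have h1 : (1 - p) ⊓ p = 0 := htrans (1 - p) (sub_nonneg.mpr hp1) hd
    have h2 : (1 - p) * p = 0 := mul_of_disjoint h1
    have : p - p * p = 0 := by
      calc p - p * p = (1 - p) * p := by ring
        _ = 0 := h2
    have := sub_eq_zero.mp this
    exact this.symm
  exact ⟨p, hpE, hp0, hp1, hidem, hd, htrans⟩

/-- on the band of `u = (c•1 - h)⁺`, `p * h ≤ c•1`. -/
theorem comp_mul_le {u p h : A} (hp0 : 0 ≤ p) (hp1 : p ≤ 1) (hh : 0 ≤ h)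
    (htrans : ∀ w : A, 0 ≤ w → w ⊓ u = 0 → w ⊓ p = 0)
    {q : ℚ} (hq : 0 ≤ q) (hu : u = ((q:ℝ) • (1:A) - h)⁺) :
    p * h ≤ (q:ℝ) • (1:A) := by
  have hc1 : (0:A) ≤ (q:ℝ) • (1:A) :=
    FRieszSpace.smul_nonneg' _ _ (by exact_mod_cast hq) one_nonneg
  have hdisj : (h - (q:ℝ) • (1:A))⁺ ⊓ u = 0 := by
    rw [hu]
    have : (h - (q:ℝ) • (1:A))⁺ = ((q:ℝ) • (1:A) - h)⁻ := by
      rw [← negPart_neg, neg_sub]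
    rw [this, inf_comm]
    exact posPart_inf_negPart_eq_zero _
  have hdp : (h - (q:ℝ) • (1:A))⁺ ⊓ p = 0 :=
    htrans _ (posPart_nonneg _) hdisj
  have hmul0 : p * (h - (q:ℝ) • (1:A))⁺ = 0 := by
    rw [mul_comm]; exact mul_of_disjoint hdp
  have hdecomp : h = h ⊓ ((q:ℝ) • (1:A)) + (h - (q:ℝ) • (1:A))⁺ := by
    rw [← sub_inf_eq_posPart]; ring
  calc p * h = p * (h ⊓ ((q:ℝ) • (1:A))) + p * (h - (q:ℝ) • (1:A))⁺ := by
        rw [← mul_add, ← hdecomp]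
    _ = p * (h ⊓ ((q:ℝ) • (1:A))) := by rw [hmul0, add_zero]
    _ ≤ 1 * ((q:ℝ) • (1:A)) := mul_mono hp0 (le_inf hh hc1) hp1 inf_le_right
    _ = (q:ℝ) • (1:A) := one_mul _

end Components


section KeyLemmas

theorem le_posPart' (a : A) : a ≤ a⁺ := le_sup_left

theorem key2 (d C : A) : (d + C)⁺ ⊓ (|d| - C)⁺ ≤ (d - C)⁺ := by
  have e1 : |d| - C = (d - C) ⊔ (-d - C) := by
    show (d ⊔ -d) - C = _
    rw [sup_sub]
  have e2 : (|d| - C)⁺ = (d - C)⁺ ⊔ (-d - C)⁺ := by rw [e1, posPart_sup]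
  have e3 : (-d - C)⁺ = (d + C)⁻ := by
    rw [show -d - C = -(d + C) by ring, posPart_neg]
  rw [e2, e3]
  have hP : 0 ≤ (d - C)⁺ := posPart_nonneg _
  have hQ : 0 ≤ (d + C)⁻ := negPart_nonneg _
  have hX : 0 ≤ (d + C)⁺ := posPart_nonneg _
  calc (d + C)⁺ ⊓ ((d - C)⁺ ⊔ (d + C)⁻)
      ≤ (d + C)⁺ ⊓ ((d - C)⁺ + (d + C)⁻) := inf_le_inf_left _ (sup_le_add hP hQ)
    _ ≤ (d + C)⁺ ⊓ (d - C)⁺ + (d + C)⁺ ⊓ (d + C)⁻ := inf_add_le hX hP hQ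
    _ ≤ (d - C)⁺ + 0 := add_le_add inf_le_right (le_of_eq (posPart_inf_negPart_eq_zero _))
    _ = (d - C)⁺ := add_zero _

theorem neg_abs_eq_inf (a : A) : a ⊓ -a = -|a| := by
  rw [show |a| = a ⊔ -a from rfl, neg_sup, neg_neg, inf_comm]

theorem key4 {a C : A} (hC : 0 ≤ C) : |a - C| ⊓ |a + C| ≤ |(|a| - C)| := by
  have e1 : |a - C| = (a - C) ⊔ (C - a) := by
    show (a - C) ⊔ -(a - C) = _
    rw [neg_sub]
  have e2 : |a + C| = (a + C) ⊔ (-a - C) := by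
    show (a + C) ⊔ -(a + C) = _
    rw [neg_add, ← sub_eq_add_neg]
  have eM : (|a| - C) ⊔ (C - |a|) = |(|a| - C)| := by
    show _ = (|a| - C) ⊔ -(|a| - C)
    rw [neg_sub]
  have b1 : (a - C) ⊓ (a + C) ≤ |(|a| - C)| := by
    calc (a - C) ⊓ (a + C) ≤ a - C := inf_le_left
      _ ≤ |a| - C := sub_le_sub_right (le_abs_self a) C
      _ ≤ _ := eM ▸ le_sup_left
  have b2 : (a - C) ⊓ (-a - C) ≤ |(|a| - C)| := by
    have : (a - C) ⊓ (-a - C) = (a ⊓ -a) - C := by rw [inf_sub]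
    rw [this, neg_abs_eq_inf]
    calc -|a| - C ≤ -|a| + C := by
          have : -C ≤ C := neg_le_self hC
          calc -|a| - C = -|a| + -C := by ring
            _ ≤ -|a| + C := add_le_add_right this _
      _ = C - |a| := by ring
      _ ≤ _ := eM ▸ le_sup_right
  have b3 : (C - a) ⊓ (a + C) ≤ |(|a| - C)| := by
    have : (C - a) ⊓ (a + C) = C + (-a ⊓ a) := by
      rw [add_inf, sub_eq_add_neg, add_comm a C]
    rw [this, inf_comm, neg_abs_eq_inf]
    calc C + -|a| = C - |a| := by ring
      _ ≤ _ := eM ▸ le_sup_right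
  have b4 : (C - a) ⊓ (-a - C) ≤ |(|a| - C)| := by
    have : (C - a) ⊓ (-a - C) = -a + (C ⊓ -C) := by
      rw [add_inf, sub_eq_add_neg, add_comm C (-a), sub_eq_add_neg]
    rw [this, neg_abs_eq_inf, abs_of_nonneg hC]
    calc -a + -C = -a - C := by ring
      _ ≤ |a| - C := sub_le_sub_right (neg_le_abs a) C
      _ ≤ _ := eM ▸ le_sup_left
  rw [e1, e2, inf_sup_right, inf_sup_left, inf_sup_left]
  exact sup_le (sup_le b1 b2) (sup_le b3 b4)

theorem key3 (d αv : A) :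
    αv - (d - αv)⁺ ≤ (αv - (d + αv)⁺) ⊔ (αv + αv - |d|) := by
  rw [← sub_nonpos, sub_sup]
  have t1 : (αv - (d - αv)⁺) - (αv - (d + αv)⁺) = (d + αv)⁺ - (d - αv)⁺ := by ring
  have t2 : (αv - (d - αv)⁺) - (αv + αv - |d|) = |d| - αv - (d - αv)⁺ := by ring
  rw [t1, t2]
  have h2 : |d| - αv - (d - αv)⁺ ≤ (|d| - αv)⁺ - (d - αv)⁺ :=
    sub_le_sub_right (le_posPart' _) _
  calc ((d + αv)⁺ - (d - αv)⁺) ⊓ (|d| - αv - (d - αv)⁺)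
      ≤ ((d + αv)⁺ - (d - αv)⁺) ⊓ ((|d| - αv)⁺ - (d - αv)⁺) := inf_le_inf_left _ h2
    _ = ((d + αv)⁺ ⊓ (|d| - αv)⁺) - (d - αv)⁺ := by rw [inf_sub]
    _ ≤ (d - αv)⁺ - (d - αv)⁺ := sub_le_sub_right (key2 d αv) _
    _ = 0 := sub_self _

theorem inf_le_convex {a b : A} {t : ℝ} (h0 : 0 ≤ t) (h1 : t ≤ 1) :
    a ⊓ b ≤ t • a + (1 - t) • b := by
  have e : a ⊓ b = t • (a ⊓ b) + (1 - t) • (a ⊓ b) := by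
    rw [← add_smul]
    norm_num
  rw [e]
  exact add_le_add (smul_mono inf_le_left h0) (smul_mono inf_le_right (by linarith))

theorem one_le_ramp {x : A} (hx : 0 ≤ x) {ν δ : ℝ} (hδ0 : 0 ≤ δ) (hδ1 : δ ≤ 1)
    (hid : δ * ν = δ + 1) : (1 : A) ≤ (ν • (1:A) - x)⁺ + δ • x := by
  have e1 : (ν • (1:A) - x)⁺ + δ • x = (ν • (1:A) - x + δ • x) ⊔ (δ • x) := by
    rw [posPart_def, sup_add, zero_add]
  rw [e1, ← sub_nonpos, sub_sup]
  have hconv := inf_le_convex (a := 1 - (ν • (1:A) - x + δ • x)) (b := 1 - δ • x) hδ0 hδ1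
  refine le_trans hconv ?_
  have : δ • ((1:A) - (ν • (1:A) - x + δ • x)) + (1 - δ) • ((1:A) - δ • x) = (-δ) • (1:A) +
      ((δ + 1) • (1:A) - (δ * ν) • (1:A)) := by
    module
  rw [this, hid, sub_self, add_zero]
  calc (-δ) • (1:A) ≤ (0:ℝ) • (1:A) := smul_mono_scalar (by linarith) one_nonneg
    _ = 0 := zero_smul _ _

end KeyLemmas

end FRaux

/-- auxiliary symmetric iterated supremum `f 0 ⊔ f 1 ⊔ f (-1) ⊔ ... ⊔ f j ⊔ f (-j)` -/
def FRaux.natRecSup {A : Type*} [FRieszSpace A] (f : ℤ → A) : ℕ → A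
  | 0 => f 0
  | (j+1) => FRaux.natRecSup f j ⊔ f (j+1) ⊔ f (-(j+1) : ℤ)

namespace FRaux

@[simp] theorem natRecSup_zero (f : ℤ → A) : natRecSup f 0 = f 0 := rfl
@[simp] theorem natRecSup_succ (f : ℤ → A) (j : ℕ) :
    natRecSup f (j+1) = natRecSup f j ⊔ f (j+1) ⊔ f (-(j+1) : ℤ) := rfl

set_option maxHeartbeats 2000000 in
theorem small_of_quad {E : Set A} {T : A →ₗ[ℝ] A}
    (hTU : TUniversallyComplete E T) (hT : IsCondExpOn E T) (hE : IsRieszSubspace E)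
    {g w : A} (hgE : g ∈ E) (hw0 : 0 ≤ w)
    (hquad : ∀ q : ℚ, w ≤ (g - (q:ℝ) • 1) * (g - (q:ℝ) • 1)) (k : ℕ) :
    k • (w ⊓ 1) ≤ 1 + |g| := by
  classical
  set x : A := |g| with hxdef
  have hx0 : 0 ≤ x := abs_nonneg' g
  have hxE : x ∈ E := mem_abs hE hgE
  rcases Nat.eq_zero_or_pos k with hk0 | hk1
  · subst hk0
    simpa using add_nonneg one_nonneg hx0
  set n : ℕ := 3 * k + 1 with hn
  set m : ℕ := n * n with hm
  set J : ℕ := n * m with hJ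
  have hn2 : 2 ≤ n := by omega
  have hm1 : 1 ≤ m := by
    have hn1 : 1 ≤ n := by omega
    calc 1 = 1 * 1 := rfl
      _ ≤ n * n := Nat.mul_le_mul hn1 hn1
  have hmQ : (0:ℚ) < (m:ℚ) := by exact_mod_cast hm1
  have hmR : (0:ℝ) < (m:ℝ) := by exact_mod_cast hm1
  set tq : ℚ := 1 / (m:ℚ) with htq
  set αq : ℚ := 1 / (2 * (m:ℚ)) with hαq
  have hαq0 : 0 ≤ αq := by positivity
  have htq2α : (tq:ℝ) = (αq:ℝ) + (αq:ℝ) := by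
    rw [htq, hαq]; push_cast; rw [← add_div]; ring_nf
  set qt : ℤ → ℚ := fun i => (i:ℚ) / (m:ℚ) with hqt
  set tent : ℤ → A := fun i => ((tq:ℝ) • (1:A) - |g - ((qt i : ℚ):ℝ) • 1|)⁺ with htent
  have htmem : ∀ i, tent i ∈ E := by
    intro i
    exact mem_posPart hE (mem_sub hE (hE.smul_mem _ _ hE.one_mem)
      (mem_abs hE (mem_sub hE hgE (hE.smul_mem _ _ hE.one_mem))))
  have htnn : ∀ i, 0 ≤ tent i := fun i => posPart_nonneg _
  choose p hpE hp0 hp1 hpid hpdis hptr using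
    fun i : ℤ => comp_exists hTU hT hE (htmem i) (htnn i)
  -- (B1) product bound on each band
  have hwp : ∀ i : ℤ, w * p i ≤ ((tq * tq : ℚ):ℝ) • 1 := by
    intro i
    have hyabs : 0 ≤ |g - ((qt i : ℚ):ℝ) • 1| := abs_nonneg' _
    have htq0 : (0:ℚ) ≤ tq := by rw [htq]; positivity
    have hph : p i * |g - ((qt i : ℚ):ℝ) • 1| ≤ (tq:ℝ) • 1 :=
      comp_mul_le (hp0 i) (hp1 i) hyabs (hptr i) htq0 rfl
    have h1 : w * p i ≤ ((g - ((qt i : ℚ):ℝ) • 1) * (g - ((qt i : ℚ):ℝ) • 1)) * p i :=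
      mul_mono hw0 (hp0 i) (hquad _) le_rfl
    have h2 : ((g - ((qt i : ℚ):ℝ) • 1) * (g - ((qt i : ℚ):ℝ) • 1)) * p i
        = (|g - ((qt i : ℚ):ℝ) • 1| * p i) * (|g - ((qt i : ℚ):ℝ) • 1| * p i) := by
      rw [← abs_sq]
      calc |g - ((qt i : ℚ):ℝ) • 1| * |g - ((qt i : ℚ):ℝ) • 1| * p i
          = |g - ((qt i : ℚ):ℝ) • 1| * |g - ((qt i : ℚ):ℝ) • 1| * (p i * p i) := by
            rw [hpid i]
        _ = (|g - ((qt i : ℚ):ℝ) • 1| * p i) * (|g - ((qt i : ℚ):ℝ) • 1| * p i) := by ring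
    have h3 : (|g - ((qt i : ℚ):ℝ) • 1| * p i) * (|g - ((qt i : ℚ):ℝ) • 1| * p i)
        ≤ ((tq:ℝ) • 1) * ((tq:ℝ) • 1) := by
      have hyp : 0 ≤ |g - ((qt i : ℚ):ℝ) • 1| * p i :=
        FRieszSpace.mul_nonneg' _ _ hyabs (hp0 i)
      have hyp2 : |g - ((qt i : ℚ):ℝ) • 1| * p i ≤ (tq:ℝ) • 1 := by
        rw [mul_comm]; exact hph
      exact mul_mono hyp hyp hyp2 hyp2
    calc w * p i ≤ _ := h1
      _ = _ := h2
      _ ≤ ((tq:ℝ) • 1) * ((tq:ℝ) • 1) := h3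
      _ = ((tq * tq : ℚ):ℝ) • 1 := rat_smul_one_sq tq tq
  -- (B3) facts about PR
  have hPRnn : ∀ j, 0 ≤ natRecSup p j := by
    intro j
    induction j with
    | zero => exact hp0 0
    | succ j ih => exact le_trans ih (le_trans le_sup_left le_sup_left)
  have hPRle1 : ∀ j, natRecSup p j ≤ 1 := by
    intro j
    induction j with
    | zero => exact hp1 0
    | succ j ih => exact sup_le (sup_le ih (hp1 _)) (hp1 _)
  have hpPR : ∀ j : ℕ, ∀ i : ℤ, -(j:ℤ) ≤ i → i ≤ j → p i ≤ natRecSup p j := by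
    intro j
    induction j with
    | zero =>
      intro i h1 h2
      have : i = 0 := by omega
      subst this; simp
    | succ j ih =>
      intro i h1 h2
      rcases lt_trichotomy i (j+1:ℤ) with h | h | h
      · rcases lt_trichotomy (-(j:ℤ)-1) i with h' | h' | h'
        · exact le_trans (ih i (by omega) (by omega)) (le_trans le_sup_left le_sup_left)
        · rw [natRecSup_succ]
          have : i = -((j:ℤ)+1) := by omega
          rw [this]
          push_cast
          exact le_sup_right
        · exact absurd h' (by omega)
      · rw [natRecSup_succ]
        rw [h]
        push_cast
        exact le_trans le_sup_right le_sup_left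
      · omega
  -- (B2) summed product bound
  have hw1nn : 0 ≤ w ⊓ 1 := le_inf hw0 one_nonneg
  have hw1p : ∀ i, (w ⊓ 1) * p i ≤ ((tq * tq : ℚ):ℝ) • 1 := fun i =>
    le_trans (mul_mono hw1nn (hp0 i) inf_le_left le_rfl) (hwp i)
  have hPRb : ∀ j : ℕ, (w ⊓ 1) * natRecSup p j ≤ (2*j+1) • (((tq * tq : ℚ):ℝ) • 1) := by
    intro j
    induction j with
    | zero => simpa using hw1p 0
    | succ j ih =>
      have hsle : natRecSup p (j+1) ≤ natRecSup p j + p (j+1) + p (-(j+1):ℤ) := by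
        rw [natRecSup_succ]
        calc natRecSup p j ⊔ p (j+1) ⊔ p (-(j+1):ℤ)
            ≤ (natRecSup p j + p (j+1)) ⊔ p (-(j+1):ℤ) :=
              sup_le_sup_right (sup_le_add (hPRnn j) (hp0 _)) _
          _ ≤ _ := sup_le_add (add_nonneg (hPRnn j) (hp0 _)) (hp0 _)
      have e23 : (2*(j+1)+1) = ((2*j+1)+1)+1 := by omega
      calc (w ⊓ 1) * natRecSup p (j+1)
          ≤ (w ⊓ 1) * (natRecSup p j + p (j+1) + p (-(j+1):ℤ)) :=
            mul_mono hw1nn (hPRnn (j+1)) le_rfl hsle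
        _ = (w⊓1)*natRecSup p j + (w⊓1)*p (j+1) + (w⊓1)*p (-(j+1):ℤ) := by ring
        _ ≤ (2*j+1) • (((tq * tq : ℚ):ℝ) • 1) + ((tq * tq : ℚ):ℝ) • 1
              + ((tq * tq : ℚ):ℝ) • 1 := add_le_add (add_le_add ih (hw1p _)) (hw1p _)
        _ = (2*(j+1)+1) • (((tq * tq : ℚ):ℝ) • 1) := by
            rw [e23, succ_nsmul (((tq * tq : ℚ):ℝ) • (1:A)) ((2*j+1)+1),
              succ_nsmul (((tq * tq : ℚ):ℝ) • (1:A)) (2*j+1)]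
  -- (B4) nonnegativity of tent sups
  -- (B4) coverage of the grid
  have hRnn : ∀ j, 0 ≤ natRecSup tent j := by
    intro j
    induction j with
    | zero => exact htnn 0
    | succ j ih => exact le_trans ih (le_trans le_sup_left le_sup_left)
  have hcov : ∀ j : ℕ,
      (αq:ℝ) • (1:A) - (x - ((qt j + αq : ℚ):ℝ) • 1)⁺ ≤ natRecSup tent j := by
    intro j
    induction j with
    | zero =>
      have hq00 : qt (0:ℤ) = 0 := by rw [hqt]; simp
      have ht0 : tent 0 = ((tq:ℝ) • (1:A) - x)⁺ := by
        rw [htent]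
        simp only [hq00]
        norm_num
        rfl
      have hq0 : ((qt (0:ℤ) + αq : ℚ):ℝ) = ((αq:ℚ):ℝ) := by rw [hq00]; norm_num
      rw [natRecSup_zero, ht0]
      rw [show ((0:ℕ):ℤ) = (0:ℤ) by simp, hq0]
      have e1 : (αq:ℝ) • (1:A) - (x - (αq:ℝ) • 1)⁺ = ((tq:ℝ) • (1:A) - x) ⊓ ((αq:ℝ) • 1) := by
        rw [posPart_def, sub_sup, sub_zero, htq2α, add_smul]
        congr 1
        abel
      rw [e1]
      exact le_trans inf_le_left (le_posPart' _)
    | succ j ih =>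
      have hcval : ((qt ((j:ℤ)+1) : ℚ):ℝ) = ((qt j + αq : ℚ):ℝ) + (αq:ℝ) := by
        rw [hqt, hαq]
        push_cast
        field_simp
        ring
      have hcnn : (0:ℝ) ≤ ((qt ((j:ℤ)+1) : ℚ):ℝ) := by
        rw [hqt]
        push_cast
        positivity
      have hcv0 : (0:A) ≤ ((qt ((j:ℤ)+1) : ℚ):ℝ) • 1 :=
        FRieszSpace.smul_nonneg' _ _ hcnn one_nonneg
      have hmerge : (tq:ℝ) • (1:A) - |x - ((qt ((j:ℤ)+1) : ℚ):ℝ) • 1| ≤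
          tent ((j:ℤ)+1) ⊔ tent (-((j:ℤ)+1)) := by
        have hneg : ((qt (-((j:ℤ)+1)) : ℚ):ℝ) = -((qt ((j:ℤ)+1) : ℚ):ℝ) := by
          rw [hqt]; push_cast; ring
        have e2 : tent (-((j:ℤ)+1)) = ((tq:ℝ) • (1:A) - |g + ((qt ((j:ℤ)+1) : ℚ):ℝ) • 1|)⁺ := by
          rw [htent]
          simp only [hneg, neg_smul, sub_neg_eq_add]
        have e3 : tent ((j:ℤ)+1) = ((tq:ℝ) • (1:A) - |g - ((qt ((j:ℤ)+1) : ℚ):ℝ) • 1|)⁺ := rfl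
        rw [e2, e3, ← posPart_sup, ← sub_inf]
        refine le_trans ?_ (le_posPart' _)
        apply sub_le_sub_left
        exact key4 hcv0
      have k3 := key3 (x - ((qt ((j:ℤ)+1) : ℚ):ℝ) • 1) ((αq:ℝ) • (1:A))
      have r1 : x - ((qt ((j:ℤ)+1) : ℚ):ℝ) • 1 - (αq:ℝ) • (1:A)
          = x - ((qt ((j:ℤ)+1) + αq : ℚ):ℝ) • 1 := by
        rw [show ((qt ((j:ℤ)+1) + αq : ℚ):ℝ) = ((qt ((j:ℤ)+1) : ℚ):ℝ) + ((αq:ℚ):ℝ) by push_cast; ring,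
          add_smul]
        abel
      have r2 : x - ((qt ((j:ℤ)+1) : ℚ):ℝ) • 1 + (αq:ℝ) • (1:A)
          = x - ((qt j + αq : ℚ):ℝ) • 1 := by
        rw [hcval, add_smul]
        abel
      have r3 : (αq:ℝ) • (1:A) + (αq:ℝ) • (1:A) = (tq:ℝ) • (1:A) := by
        rw [htq2α, add_smul]
      rw [r1, r2, r3] at k3
      have hfin : (αq:ℝ) • (1:A) - (x - ((qt ((j:ℤ)+1) + αq : ℚ):ℝ) • 1)⁺ ≤
          natRecSup tent j ⊔ (tent ((j:ℤ)+1) ⊔ tent (-((j:ℤ)+1))) := by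
        refine le_trans k3 (sup_le_sup ?_ hmerge)
        exact le_trans (le_of_eq rfl) ih
      rw [natRecSup_succ, sup_assoc]
      have hc9 : ((j:ℤ)+1) = ((j+1:ℕ):ℤ) := by push_cast; ring
      rw [hc9] at hfin
      exact hfin
  -- (B5) 1 - PR ≤ δ • x
  set δ : ℝ := 1 / ((n:ℝ) - 1) with hδ
  have hnR2 : (2:ℝ) ≤ (n:ℝ) := by exact_mod_cast hn2
  have hδpos : (0:ℝ) < (n:ℝ) - 1 := by linarith
  have hδ0 : 0 ≤ δ := le_of_lt (by rw [hδ]; exact div_pos one_pos hδpos)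
  have hcover : 1 - natRecSup p J ≤ δ • x := by
    set y : A := 1 - natRecSup p J with hy
    have hy0 : 0 ≤ y := sub_nonneg.mpr (hPRle1 J)
    have hyt : ∀ i : ℤ, -(J:ℤ) ≤ i → i ≤ J → y ⊓ tent i = 0 := by
      intro i h1 h2
      have h3 : y ≤ 1 - p i := sub_le_sub_left (hpPR J i h1 h2) 1
      refine le_antisymm ?_ (le_inf hy0 (htnn i))
      calc y ⊓ tent i ≤ (1 - p i) ⊓ tent i := inf_le_inf_right _ h3
        _ = 0 := hpdis i
    have hyR : ∀ j : ℕ, j ≤ J → y ⊓ natRecSup tent j = 0 := by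
      intro j
      induction j with
      | zero =>
        intro _
        rw [natRecSup_zero]
        exact hyt 0 (by omega) (by omega)
      | succ j ih =>
        intro hj
        have h4 := ih (by omega)
        have t1 := hyt ((j+1:ℕ):ℤ) (by omega) (by exact_mod_cast (by omega : j+1 ≤ J))
        have t2 := hyt (-((j+1:ℕ):ℤ)) (by
            have : ((j+1:ℕ):ℤ) ≤ (J:ℤ) := by exact_mod_cast (by omega : j+1 ≤ J)
            omega)
          (by omega)
        refine le_antisymm ?_ (le_inf hy0 (hRnn _))
        calc y ⊓ natRecSup tent (j+1)
            ≤ y ⊓ (natRecSup tent j + tent ((j+1:ℕ):ℤ) + tent (-((j+1:ℕ):ℤ))) := by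
              refine inf_le_inf_left _ ?_
              rw [natRecSup_succ]
              calc natRecSup tent j ⊔ tent ((j+1:ℕ):ℤ) ⊔ tent (-((j+1:ℕ):ℤ))
                  ≤ (natRecSup tent j + tent ((j+1:ℕ):ℤ)) ⊔ tent (-((j+1:ℕ):ℤ)) :=
                    sup_le_sup_right (sup_le_add (hRnn j) (htnn _)) _
                _ ≤ _ := sup_le_add (add_nonneg (hRnn j) (htnn _)) (htnn _)
          _ ≤ y ⊓ (natRecSup tent j + tent ((j+1:ℕ):ℤ)) + y ⊓ tent (-((j+1:ℕ):ℤ)) :=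
              inf_add_le hy0 (add_nonneg (hRnn j) (htnn _)) (htnn _)
          _ ≤ (y ⊓ natRecSup tent j + y ⊓ tent ((j+1:ℕ):ℤ)) + y ⊓ tent (-((j+1:ℕ):ℤ)) :=
              add_le_add_left (inf_add_le hy0 (hRnn j) (htnn _)) _
          _ = 0 := by rw [h4, t1, t2]; simp
    set C : ℕ := 2 * m * n with hC
    set R : A := natRecSup tent J with hR
    have hyCR : y ⊓ (C • R) = 0 := inf_nsmul_eq_zero hy0 (hRnn J) (hyR J le_rfl) C
    set b : A := (x - ((n:ℚ):ℝ) • 1)⁺ with hb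
    set un : A := (((n:ℚ):ℝ) • 1 - x)⁺ with hun
    have hunE : un ∈ E := mem_posPart hE (mem_sub hE (hE.smul_mem _ _ hE.one_mem) hxE)
    have hun0 : 0 ≤ un := posPart_nonneg _
    have hb0 : 0 ≤ b := posPart_nonneg _
    have hRge : (αq:ℝ) • (1:A) - b ≤ R := by
      refine le_trans ?_ (hcov J)
      apply sub_le_sub_left
      have hmQne : ((m:ℚ)) ≠ 0 := ne_of_gt hmQ
      have hscal : ((n:ℚ):ℝ) ≤ ((qt J + αq : ℚ):ℝ) := by
        have heq : (qt J + αq : ℚ) = (n:ℚ) + αq := by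
          rw [hqt, hJ, hαq]
          push_cast
          field_simp
        rw [heq]
        have hαR : (0:ℝ) ≤ ((αq:ℚ):ℝ) := by exact_mod_cast hαq0
        push_cast
        push_cast at hαR
        linarith
      have harg : x - ((qt J + αq : ℚ):ℝ) • 1 ≤ x - ((n:ℚ):ℝ) • 1 :=
        sub_le_sub_left (smul_mono_scalar hscal one_nonneg) x
      rw [hb, posPart_def, posPart_def]
      exact sup_le_sup_right harg 0
    have hCR : ((n:ℚ):ℝ) • (1:A) - C • b ≤ C • R := by
      have h5 : C • ((αq:ℝ) • (1:A) - b) ≤ C • R := nsmul_mono hRge C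
      have h6 : C • ((αq:ℝ) • (1:A) - b) = ((n:ℚ):ℝ) • (1:A) - C • b := by
        rw [nsmul_sub]
        congr 1
        rw [← Nat.cast_smul_eq_nsmul ℝ C, smul_smul]
        congr 1
        rw [hC, hαq]
        push_cast
        field_simp
      rwa [h6] at h5
    have hunb : un ⊓ (C • b) = 0 := by
      have hbneg : b = (((n:ℚ):ℝ) • (1:A) - x)⁻ := by
        rw [hb, ← posPart_neg, neg_sub]
      rw [hun, hbneg]
      exact posPart_inf_nsmul_negPart _ C
    have hun_le : un ≤ ((n:ℚ):ℝ) • 1 := by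
      rw [hun, posPart_def]
      exact sup_le (sub_le_self _ hx0)
        (FRieszSpace.smul_nonneg' _ _ (by positivity) one_nonneg)
    have hsplit : un - C • b ≤ un ⊓ (C • R) := by
      refine le_trans (le_inf (sub_le_self _ (nsmul_nonneg' hb0 C))
        (le_trans (sub_le_sub_right hun_le _) le_rfl)) (inf_le_inf_left _ hCR)
    have hyun : y ⊓ un = 0 := by
      have h7 : y ⊓ un ≤ C • b := by
        have hdec : un = un ⊓ (C • R) + (un - un ⊓ (C • R)) := by ring
        have h8 : 0 ≤ un ⊓ (C • R) := le_inf hun0 (nsmul_nonneg' (hRnn J) C)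
        have h9 : 0 ≤ un - un ⊓ (C • R) := sub_nonneg.mpr inf_le_left
        calc y ⊓ un = y ⊓ (un ⊓ (C • R) + (un - un ⊓ (C • R))) := by rw [← hdec]
          _ ≤ y ⊓ (un ⊓ (C • R)) + y ⊓ (un - un ⊓ (C • R)) := inf_add_le hy0 h8 h9
          _ ≤ y ⊓ (C • R) + (un - un ⊓ (C • R)) :=
              add_le_add (inf_le_inf_left _ inf_le_right) inf_le_right
          _ = un - un ⊓ (C • R) := by rw [hyCR, zero_add]
          _ ≤ C • b := by
              have h10 := sub_le_sub_left hsplit un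
              calc un - un ⊓ (C • R) ≤ un - (un - C • b) := h10
                _ = C • b := by ring
      refine le_antisymm ?_ (le_inf hy0 hun0)
      calc y ⊓ un ≤ un ⊓ (C • b) := le_inf inf_le_right h7
        _ = 0 := hunb
    obtain ⟨pn, hpnE, hpn0, hpn1, -, hpnd, hpntr⟩ := comp_exists hTU hT hE hunE hun0
    have hypn : y ⊓ pn = 0 := hpntr y hy0 hyun
    have hpnPR : pn ≤ natRecSup p J := by
      have e : natRecSup p J + y = 1 := by rw [hy]; ring
      calc pn = pn ⊓ 1 := (inf_eq_left.mpr hpn1).symm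
        _ = pn ⊓ (natRecSup p J + y) := by rw [e]
        _ ≤ pn ⊓ natRecSup p J + pn ⊓ y := inf_add_le hpn0 (hPRnn J) hy0
        _ ≤ natRecSup p J + 0 := add_le_add inf_le_right (le_of_eq (by rw [inf_comm]; exact hypn))
        _ = natRecSup p J := add_zero _
    have hramp : (1:A) ≤ un + δ • x := by
      have hne : (n:ℝ) - 1 ≠ 0 := ne_of_gt hδpos
      have hid : δ * ((n:ℚ):ℝ) = δ + 1 := by
        rw [hδ]
        push_cast
        field_simp
        ring
      have hδ1 : δ ≤ 1 := by
        rw [hδ, div_le_one hδpos]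
        linarith
      have := one_le_ramp (x := x) hx0 hδ0 hδ1 hid
      rw [hun]
      exact this
    have hq' : 1 - pn ≤ δ • x := by
      have hq'0 : 0 ≤ 1 - pn := sub_nonneg.mpr hpn1
      have hδx0 : 0 ≤ δ • x := FRieszSpace.smul_nonneg' _ _ hδ0 hx0
      calc 1 - pn = (1 - pn) ⊓ 1 := (inf_eq_left.mpr (sub_le_self _ hpn0)).symm
        _ ≤ (1 - pn) ⊓ (un + δ • x) := inf_le_inf_left _ hramp
        _ ≤ (1 - pn) ⊓ un + (1 - pn) ⊓ (δ • x) := inf_add_le hq'0 hun0 hδx0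
        _ ≤ 0 + δ • x := add_le_add (le_of_eq hpnd) inf_le_right
        _ = δ • x := zero_add _
    calc 1 - natRecSup p J ≤ 1 - pn := sub_le_sub_left hpnPR 1
      _ ≤ δ • x := hq'
  have hfinal : w ⊓ 1 ≤ (2*J+1) • (((tq * tq : ℚ):ℝ) • 1) + δ • x := by
    have e : w ⊓ 1 = (w ⊓ 1) * natRecSup p J + (w ⊓ 1) * (1 - natRecSup p J) := by ring
    rw [e]
    refine add_le_add (hPRb J) ?_
    calc (w ⊓ 1) * (1 - natRecSup p J) ≤ 1 * (1 - natRecSup p J) :=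
          mul_mono (le_inf hw0 one_nonneg) (sub_nonneg.mpr (hPRle1 J)) inf_le_right le_rfl
      _ = 1 - natRecSup p J := one_mul _
      _ ≤ δ • x := hcover
  have hcol : (2*J+1) • (((tq * tq : ℚ):ℝ) • (1:A))
      = ((2*(J:ℝ)+1) * ((tq:ℝ) * (tq:ℝ))) • (1:A) := by
    rw [← Nat.cast_smul_eq_nsmul ℝ (2*J+1), smul_smul]
    congr 1
    push_cast
    ring
  have hNpos : (0:ℝ) < (n:ℝ) := by linarith
  have hs1 : (k:ℝ) * ((2*(J:ℝ)+1) * ((tq:ℝ) * (tq:ℝ))) ≤ 1 := by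
    have htqR : (tq:ℝ) = 1 / ((m:ℝ)) := by rw [htq]; push_cast; ring
    have hmcast : ((m:ℝ)) = (n:ℝ) * (n:ℝ) := by rw [hm]; push_cast; ring
    have hJcast : ((J:ℝ)) = (n:ℝ) * ((n:ℝ) * (n:ℝ)) := by rw [hJ, hm]; push_cast; ring
    have hk1R : (1:ℝ) ≤ (k:ℝ) := by exact_mod_cast hk1
    have e : (k:ℝ) * ((2*(J:ℝ)+1) * ((tq:ℝ) * (tq:ℝ)))
        = ((k:ℝ) * (2*(J:ℝ)+1)) / ((m:ℝ) * (m:ℝ)) := by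
      rw [htqR]
      field_simp
    rw [e, div_le_one (by positivity), hJcast, hmcast]
    rw [show ((n:ℝ)) = 3 * (k:ℝ) + 1 from by rw [hn]; push_cast; ring]
    have hk0R : (0:ℝ) ≤ (k:ℝ) := by positivity
    have expand : ((3*(k:ℝ)+1) * (3*(k:ℝ)+1)) * ((3*(k:ℝ)+1) * (3*(k:ℝ)+1))
        - (k:ℝ) * (2 * ((3*(k:ℝ)+1) * ((3*(k:ℝ)+1) * (3*(k:ℝ)+1))) + 1)
        = 27*(k:ℝ)^4 + 54*(k:ℝ)^3 + 36*(k:ℝ)^2 + 9*(k:ℝ) + 1 := by ring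
    have hpos : (0:ℝ) ≤ 27*(k:ℝ)^4 + 54*(k:ℝ)^3 + 36*(k:ℝ)^2 + 9*(k:ℝ) + 1 := by positivity
    linarith [expand, hpos]
  have hs2 : (k:ℝ) * δ ≤ 1 := by
    have h3k : (n:ℝ) - 1 = 3 * (k:ℝ) := by rw [hn]; push_cast; ring
    have hk0R : (0:ℝ) < (k:ℝ) := by exact_mod_cast hk1
    rw [hδ, h3k]
    rw [mul_one_div, div_le_one (by linarith)]
    linarith
  calc k • (w ⊓ 1) ≤ k • (((2*(J:ℝ)+1) * ((tq:ℝ) * (tq:ℝ))) • (1:A) + δ • x) := by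
        rw [← hcol]
        exact nsmul_mono hfinal k
    _ = ((k:ℝ) * ((2*(J:ℝ)+1) * ((tq:ℝ) * (tq:ℝ)))) • (1:A) + ((k:ℝ) * δ) • x := by
        rw [nsmul_add, ← Nat.cast_smul_eq_nsmul ℝ k (((2*(J:ℝ)+1) * ((tq:ℝ) * (tq:ℝ))) • (1:A)),
          ← Nat.cast_smul_eq_nsmul ℝ k (δ • x), smul_smul, smul_smul]
    _ ≤ (1:ℝ) • (1:A) + (1:ℝ) • x :=
        add_le_add (smul_mono_scalar hs1 one_nonneg) (smul_mono_scalar hs2 hx0)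
    _ = 1 + x := by rw [one_smul, one_smul]

end FRaux

/-- Conditional Cauchy–Schwarz type inequality: `(Sf)² ≤ S(f²)` for `f ∈ L²(T)`. -/
theorem sq_condexp_le {A : Type*} [FRieszSpace A] (E : Set A) (hE : IsRieszSubspace E)
    (T : A →ₗ[ℝ] A) (hT : IsCondExpOn E T) (hTsp : StrictlyPositive T)
    (hTU : TUniversallyComplete E T)
    (S : A →ₗ[ℝ] A) (hS : IsCondExpOn E S)
    (hTS : T.comp S = T) (hST : S.comp T = T)
    (f : A) (hf : f ∈ L2 E) : S f * S f ≤ S (f * f) := by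
  obtain ⟨hfE, hf2E⟩ := hf
  have hgE : S f ∈ E := hS.mapsTo f hfE
  set g := S f with hg
  set v := S (f * f) with hv
  have hquad : ∀ q : ℚ, (g * g - v)⁺ ≤ (g - (q:ℝ) • 1) * (g - (q:ℝ) • 1) := by
    intro q
    have expand : ∀ z : A, (z - (q:ℝ) • 1) * (z - (q:ℝ) • 1)
        = z * z - ((q:ℝ) • z + (q:ℝ) • z) + ((q*q:ℚ):ℝ) • 1 := by
      intro z
      have e1 : ((q:ℝ) • (1:A)) * z = (q:ℝ) • z := FRaux.rat_smul_one_mul q z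
      have e2 : ((q:ℝ) • (1:A)) * ((q:ℝ) • (1:A)) = ((q*q:ℚ):ℝ) • 1 :=
        FRaux.rat_smul_one_sq q q
      calc (z - (q:ℝ) • 1) * (z - (q:ℝ) • 1)
          = z * z - (((q:ℝ) • (1:A)) * z + ((q:ℝ) • (1:A)) * z)
            + ((q:ℝ) • (1:A)) * ((q:ℝ) • (1:A)) := by ring
        _ = _ := by rw [e1, e2]
    have hpos : 0 ≤ S ((f - (q:ℝ) • 1) * (f - (q:ℝ) • 1)) :=
      hS.positive _ (FRaux.sq_nonneg' _)
    have hSval : S ((f - (q:ℝ) • 1) * (f - (q:ℝ) • 1))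
        = v - ((q:ℝ) • g + (q:ℝ) • g) + ((q*q:ℚ):ℝ) • 1 := by
      rw [expand f]
      simp only [map_add, map_sub, map_smul]
      rw [hS.unit]
    have h1 : g * g - v ≤ (g - (q:ℝ) • 1) * (g - (q:ℝ) • 1) := by
      rw [expand g]
      have h2 : g * g - ((q:ℝ) • g + (q:ℝ) • g) + ((q*q:ℚ):ℝ) • 1 - (g * g - v)
          = v - ((q:ℝ) • g + (q:ℝ) • g) + ((q*q:ℚ):ℝ) • 1 := by ring
      have h3 : 0 ≤ g * g - ((q:ℝ) • g + (q:ℝ) • g) + ((q*q:ℚ):ℝ) • 1 - (g * g - v) := by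
        rw [h2, ← hSval]
        exact hpos
      exact sub_nonneg.mp h3
    rw [posPart_def]
    exact sup_le h1 (FRaux.sq_nonneg' _)
  have hmain := FRaux.small_of_quad hTU hT hE hgE (posPart_nonneg _) hquad
  have hW : (g * g - v)⁺ ⊓ 1 = 0 :=
    FRaux.arch_A hTU hT hE (hE.add_mem _ _ hE.one_mem (FRaux.mem_abs hE hgE))
      (le_inf (posPart_nonneg _) FRaux.one_nonneg) hmain
  have hwz : (g * g - v)⁺ = 0 := by
    apply FRieszSpace.one_weak_unit
    have hsup : (g * g - v)⁺ ⊔ -((g * g - v)⁺) = (g * g - v)⁺ :=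
      sup_eq_left.mpr (le_trans (neg_nonpos.mpr (posPart_nonneg _)) (posPart_nonneg _))
    rw [hsup, hW]
  have h4 : g * g - v ≤ 0 := by
    rw [← hwz]
    exact FRaux.le_posPart' _
  exact sub_nonpos.mp h4
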